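/- Let t : Fin n → A × B model a bag relation that does not satisfy the FD X→Y, and let K be the number of distinct X-values of t. Then 1 − E_σ[pdep(t_σ)] ≠ 0, n > K, 1 − pdepY > 0, and (pdep(t) − E_σ[pdep(t_σ)])/(1 − E_σ[pdep(t_σ)]) = 1 − ((1 − pdep(t))/(1 − pdepY)) · ((n−1)/(n−K)), where E_σ[pdep(t_σ)] denotes the average of pdep(t_σ) over all n! permutations σ of Fin n. (Equivalent closed form of the measure μ.) -/

import Mathlib

namespace AFD

open Finset

variable {A B : Type*}

/-- Number of indices with X-value `a`. -/
def c1 {n : ℕ} [DecidableEq A] (t : Fin n → A × B) (a : A) : ℕ :=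
  (Finset.univ.filter fun i => (t i).1 = a).card

/-- Number of indices with Y-value `b`. -/
def c2 {n : ℕ} [DecidableEq B] (t : Fin n → A × B) (b : B) : ℕ :=
  (Finset.univ.filter fun i => (t i).2 = b).card

/-- Number of indices with tuple value `(a, b)`. -/
def cnt {n : ℕ} [DecidableEq A] [DecidableEq B] (t : Fin n → A × B) (a : A) (b : B) : ℕ :=
  (Finset.univ.filter fun i => t i = (a, b)).card

/-- Marginal probability of X-value `a`. -/
noncomputable def p1 {n : ℕ} [DecidableEq A] (t : Fin n → A × B) (a : A) : ℝ :=
  (c1 t a : ℝ) / n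

/-- Marginal probability of Y-value `b`. -/
noncomputable def p2 {n : ℕ} [DecidableEq B] (t : Fin n → A × B) (b : B) : ℝ :=
  (c2 t b : ℝ) / n

/-- Joint probability of `(a, b)`. -/
noncomputable def pJ {n : ℕ} [DecidableEq A] [DecidableEq B] (t : Fin n → A × B)
    (a : A) (b : B) : ℝ :=
  (cnt t a b : ℝ) / n

/-- Conditional probability of Y-value `b` given X-value `a` (with the `0/0 = 0` convention,
which is automatic for real division in Lean). -/
noncomputable def pC {n : ℕ} [DecidableEq A] [DecidableEq B] (t : Fin n → A × B)
    (a : A) (b : B) : ℝ :=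
  pJ t a b / p1 t a

/-- The set of distinct X-values. -/
def domX {n : ℕ} [DecidableEq A] (t : Fin n → A × B) : Finset A :=
  Finset.univ.image fun i => (t i).1

/-- The set of distinct Y-values. -/
def domY {n : ℕ} [DecidableEq B] (t : Fin n → A × B) : Finset B :=
  Finset.univ.image fun i => (t i).2

/-- The set of distinct tuples. -/
def domXY {n : ℕ} [DecidableEq A] [DecidableEq B] (t : Fin n → A × B) : Finset (A × B) :=
  Finset.univ.image t

/-- The probabilistic dependency `pdep(X → Y)`. -/
noncomputable def pdep {n : ℕ} [DecidableEq A] [DecidableEq B] (t : Fin n → A × B) : ℝ :=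
  ∑ a ∈ domX t, p1 t a * ∑ b ∈ domY t, (pC t a b) ^ 2

/-- The probabilistic self-dependency `pdep(Y)`. -/
noncomputable def pdepY {n : ℕ} [DecidableEq B] (t : Fin n → A × B) : ℝ :=
  ∑ b ∈ domY t, (p2 t b) ^ 2

/-- The (X;Y)-permutation of `t` induced by the permutation `σ`. -/
def permRel {n : ℕ} (t : Fin n → A × B) (σ : Equiv.Perm (Fin n)) : Fin n → A × B :=
  fun i => ((t i).1, (t (σ i)).2)

/-- `t` satisfies the functional dependency X → Y. -/
def satFD {n : ℕ} (t : Fin n → A × B) : Prop :=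
  ∀ i j, (t i).1 = (t j).1 → (t i).2 = (t j).2

section Aux

set_option linter.unusedSectionVars false

lemma exists_perm_two' {α : Type*} [DecidableEq α] {k l k' l' : α} (h : k ≠ l) (h' : k' ≠ l') :
    ∃ τ : Equiv.Perm α, τ k = k' ∧ τ l = l' := by
  refine ⟨Equiv.swap (Equiv.swap k k' l) l' * Equiv.swap k k', ?_, ?_⟩
  · simp only [Equiv.Perm.mul_apply, Equiv.swap_apply_left]
    rw [Equiv.swap_apply_of_ne_of_ne]
    · intro e
      exact h ((Equiv.swap k k').injective (by simpa [Equiv.swap_apply_left] using e.symm)).symm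
    · exact h'
  · simp only [Equiv.Perm.mul_apply, Equiv.swap_apply_left]

lemma fiber_card_eq' {n : ℕ} {i j k l k' l' : Fin n} (hkl : k ≠ l) (hkl' : k' ≠ l') :
    ((univ : Finset (Equiv.Perm (Fin n))).filter fun σ => σ i = k ∧ σ j = l).card =
    ((univ : Finset (Equiv.Perm (Fin n))).filter fun σ => σ i = k' ∧ σ j = l').card := by
  obtain ⟨τ, hτk, hτl⟩ := exists_perm_two' hkl hkl'
  apply Finset.card_bij (fun σ _ => τ * σ)
  · intro σ hσ
    simp only [mem_filter, mem_univ, true_and] at hσ ⊢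
    simp [Equiv.Perm.mul_apply, hσ.1, hσ.2, hτk, hτl]
  · intro σ₁ h₁ σ₂ h₂ e
    exact mul_left_cancel e
  · intro σ hσ
    refine ⟨τ⁻¹ * σ, ?_, by group⟩
    simp only [mem_filter, mem_univ, true_and] at hσ ⊢
    constructor
    · rw [Equiv.Perm.mul_apply, hσ.1, ← hτk]; simp
    · rw [Equiv.Perm.mul_apply, hσ.2, ← hτl]; simp

lemma card_pair_fiber' {n : ℕ} {i j k l : Fin n} (hij : i ≠ j) (hkl : k ≠ l) :
    ((univ : Finset (Equiv.Perm (Fin n))).filter fun σ => σ i = k ∧ σ j = l).card =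
    (n - 2).factorial := by
  have hn : 2 ≤ n := by
    by_contra hc
    push_neg at hc
    interval_cases n
    · exact i.elim0
    · exact hij (Subsingleton.elim i j)
  have key : (Fintype.card (Equiv.Perm (Fin n))) =
      ∑ p ∈ (univ : Finset (Fin n)).offDiag,
        ((univ : Finset (Equiv.Perm (Fin n))).filter fun σ => (σ i, σ j) = p).card := by
    rw [← Finset.card_univ]
    apply Finset.card_eq_sum_card_fiberwise
    intro σ _
    simp only [Finset.mem_coe, Finset.mem_offDiag, mem_univ, true_and]
    exact fun e => hij (σ.injective e)
  have heach : ∀ p ∈ (univ : Finset (Fin n)).offDiag,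
      ((univ : Finset (Equiv.Perm (Fin n))).filter fun σ => (σ i, σ j) = p).card =
      ((univ : Finset (Equiv.Perm (Fin n))).filter fun σ => σ i = k ∧ σ j = l).card := by
    intro p hp
    simp only [Finset.mem_offDiag, mem_univ, true_and] at hp
    have : ((univ : Finset (Equiv.Perm (Fin n))).filter fun σ => (σ i, σ j) = p) =
        ((univ : Finset (Equiv.Perm (Fin n))).filter fun σ => σ i = p.1 ∧ σ j = p.2) := by
      apply Finset.filter_congr; intro σ _; simp [Prod.ext_iff]
    rw [this, fiber_card_eq' hp hkl]
  rw [Finset.sum_congr rfl heach, Finset.sum_const, Finset.offDiag_card, card_univ,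
    Fintype.card_fin, Fintype.card_perm, Fintype.card_fin] at key
  obtain ⟨m, rfl⟩ := Nat.exists_eq_add_of_le hn
  have hfac : (2 + m).factorial = ((2+m) * (2+m) - (2+m)) * (m.factorial) := by
    have h2 : 2 + m = m + 1 + 1 := by omega
    rw [h2, Nat.factorial_succ, Nat.factorial_succ]
    have : (m + 1 + 1) * (m + 1 + 1) - (m + 1 + 1) = (m + 1 + 1) * (m + 1) := by
      have := Nat.succ_pos m
      nlinarith [Nat.sub_add_cancel (show m+1+1 ≤ (m+1+1)*(m+1+1) from Nat.le_mul_of_pos_left _ (by omega))]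
    rw [this]; ring
  have hpos : 0 < (2+m) * (2+m) - (2+m) := by
    have h1 : (2+m) * 1 < (2+m) * (2+m) :=
      Nat.mul_lt_mul_of_le_of_lt (le_refl _) (by omega) (by omega)
    omega
  have key2 : ((2+m) * (2+m) - (2+m)) * (m.factorial) =
      ((2+m) * (2+m) - (2+m)) * ((univ : Finset (Equiv.Perm (Fin (2+m)))).filter
        fun σ => σ i = k ∧ σ j = l).card := by
    rw [← hfac, key, smul_eq_mul]
  have heq := Nat.eq_of_mul_eq_mul_left hpos key2
  rw [← heq]
  congr 1
  omega

variable {n : ℕ} [DecidableEq A] [DecidableEq B] (t : Fin n → A × B) (σ : Equiv.Perm (Fin n))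

lemma c1_perm : c1 (permRel t σ) = c1 t := rfl

lemma domX_perm : domX (permRel t σ) = domX t := rfl

lemma domY_perm : domY (permRel t σ) = domY t := by
  unfold domY permRel
  ext b
  simp only [mem_image, mem_univ, true_and]
  constructor
  · rintro ⟨i, hi⟩; exact ⟨σ i, hi⟩
  · rintro ⟨i, hi⟩; exact ⟨σ.symm i, by simpa using hi⟩

lemma cnt_perm (a : A) (b : B) :
    cnt (permRel t σ) a b =
      ((univ.filter fun i => (t i).1 = a).filter fun i => (t (σ i)).2 = b).card := by
  unfold cnt permRel
  rw [Finset.filter_filter]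
  congr 1
  apply Finset.filter_congr
  intro i _
  simp [Prod.ext_iff]

lemma sum_c1 : ∑ a ∈ domX t, c1 t a = n := by
  have := Finset.card_eq_sum_card_fiberwise
    (f := fun i : Fin n => (t i).1) (s := univ) (t := domX t)
    (fun i _ => Finset.mem_image_of_mem _ (mem_univ i))
  simpa [c1] using this.symm

lemma sum_c2 : ∑ b ∈ domY t, c2 t b = n := by
  have := Finset.card_eq_sum_card_fiberwise
    (f := fun i : Fin n => (t i).2) (s := univ) (t := domY t)
    (fun i _ => Finset.mem_image_of_mem _ (mem_univ i))
  simpa [c2] using this.symm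

lemma sum_ind (x y : B) (hx : x ∈ domY t) :
    ∑ b ∈ domY t, (if x = b ∧ y = b then (1:ℝ) else 0) = if x = y then (1:ℝ) else 0 := by
  by_cases hxy : x = y
  · subst hxy
    simp only [and_self, if_pos rfl]
    rw [Finset.sum_ite_eq (domY t) x (fun _ => (1:ℝ)), if_pos hx]
    simp
  · rw [if_neg hxy]
    apply Finset.sum_eq_zero
    intro b _
    rw [if_neg]
    rintro ⟨rfl, rfl⟩
    exact hxy rfl

lemma sq_expand (s : Finset (Fin n)) (g : Fin n → B) (hg : ∀ i, g i ∈ domY t) :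
    ∑ b ∈ domY t, ((s.filter fun i => g i = b).card : ℝ)^2 =
      ∑ i ∈ s, ∑ j ∈ s, (if g i = g j then (1:ℝ) else 0) := by
  have expand : ∀ b, ((s.filter fun i => g i = b).card : ℝ) =
      ∑ i ∈ s, (if g i = b then (1:ℝ) else 0) := by
    intro b
    rw [Finset.sum_ite, Finset.sum_const, Finset.sum_const]
    simp
  calc ∑ b ∈ domY t, ((s.filter fun i => g i = b).card : ℝ)^2
      = ∑ b ∈ domY t, ∑ i ∈ s, ∑ j ∈ s,
          (if g i = b ∧ g j = b then (1:ℝ) else 0) := by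
        apply Finset.sum_congr rfl
        intro b _
        rw [expand b, sq, Finset.sum_mul_sum]
        apply Finset.sum_congr rfl; intro i _
        apply Finset.sum_congr rfl; intro j _
        by_cases h1 : g i = b <;> by_cases h2 : g j = b <;> simp [h1, h2]
    _ = ∑ i ∈ s, ∑ j ∈ s, ∑ b ∈ domY t, (if g i = b ∧ g j = b then (1:ℝ) else 0) := by
        rw [Finset.sum_comm]
        apply Finset.sum_congr rfl; intro i _
        rw [Finset.sum_comm]
    _ = ∑ i ∈ s, ∑ j ∈ s, (if g i = g j then (1:ℝ) else 0) := by
        apply Finset.sum_congr rfl; intro i _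
        apply Finset.sum_congr rfl; intro j _
        exact sum_ind t (g i) (g j) (hg i)

/-- number of off-diagonal pairs with equal Y values -/
def Dcnt : ℕ := ((univ : Finset (Fin n)).offDiag.filter
  fun p : Fin n × Fin n => (t p.1).2 = (t p.2).2).card

lemma sum_sigma_ind {i j : Fin n} (hij : i ≠ j) :
    (((univ : Finset (Equiv.Perm (Fin n)))).filter
        fun σ => (t (σ i)).2 = (t (σ j)).2).card = (n-2).factorial * Dcnt t := by
  rw [Finset.card_eq_sum_card_fiberwise
    (f := fun σ : Equiv.Perm (Fin n) => (σ i, σ j))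
    (t := (univ : Finset (Fin n)).offDiag.filter fun p => (t p.1).2 = (t p.2).2)]
  · rw [Finset.sum_congr rfl (g := fun _ => (n-2).factorial), Finset.sum_const,
      smul_eq_mul, Nat.mul_comm]
    · rfl
    · intro p hp
      simp only [Finset.mem_filter, Finset.mem_offDiag, mem_univ, true_and] at hp
      have : (((univ : Finset (Equiv.Perm (Fin n)))).filter
          fun σ => (t (σ i)).2 = (t (σ j)).2).filter (fun σ => (σ i, σ j) = p) =
          (univ : Finset (Equiv.Perm (Fin n))).filter (fun σ => σ i = p.1 ∧ σ j = p.2) := by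
        ext σ
        simp only [Finset.mem_filter, mem_univ, true_and, Prod.ext_iff]
        constructor
        · rintro ⟨_, h2⟩; exact h2
        · rintro ⟨h1, h2⟩
          exact ⟨by rw [h1, h2]; exact hp.2, h1, h2⟩
      rw [this, card_pair_fiber' hij hp.1]
  · intro σ hσ
    simp only [Finset.mem_coe, Finset.mem_filter, mem_univ, true_and] at hσ ⊢
    simp only [Finset.mem_offDiag, mem_univ, true_and]
    exact ⟨fun e => hij (σ.injective e), hσ⟩

lemma Dcnt_eq : Dcnt t + n = ∑ b ∈ domY t, (c2 t b)^2 := by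
  classical
  set T := ((univ ×ˢ univ : Finset (Fin n × Fin n)).filter
    fun p => (t p.1).2 = (t p.2).2) with hT
  have h1 : T.card = ∑ b ∈ domY t, (c2 t b)^2 := by
    rw [Finset.card_eq_sum_card_fiberwise
      (f := fun p : Fin n × Fin n => (t p.1).2) (t := domY t)]
    · apply Finset.sum_congr rfl
      intro b hb
      have : T.filter (fun p => (t p.1).2 = b) =
          ((univ.filter fun i : Fin n => (t i).2 = b) ×ˢ
           (univ.filter fun i : Fin n => (t i).2 = b)) := by
        ext p
        simp only [hT, Finset.mem_filter, Finset.mem_product, mem_univ, true_and]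
        constructor
        · rintro ⟨h1, h2⟩; exact ⟨h2, h1 ▸ h2⟩
        · rintro ⟨h1, h2⟩; exact ⟨h1.trans h2.symm, h1⟩
      rw [this, Finset.card_product]
      simp [c2, sq]
    · intro p hp
      exact Finset.mem_image_of_mem _ (mem_univ p.1)
  have h2 : T.card = Dcnt t + n := by
    have key := Finset.card_filter_add_card_filter_not (s := T)
      (p := fun p : Fin n × Fin n => p.1 = p.2)
    have hdiag : (T.filter fun p : Fin n × Fin n => p.1 = p.2).card = n := by
      have : (T.filter fun p : Fin n × Fin n => p.1 = p.2) =
          (univ : Finset (Fin n)).diag := by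
        ext p
        simp only [hT, Finset.mem_filter, Finset.mem_product, mem_univ, true_and,
          Finset.mem_diag]
        constructor
        · rintro ⟨_, h2⟩
          exact h2
        · intro hd
          exact ⟨by rw [hd], hd⟩
      rw [this, Finset.diag_card, card_univ, Fintype.card_fin]
    have hoff : (T.filter fun p : Fin n × Fin n => ¬ p.1 = p.2).card = Dcnt t := by
      congr 1
      ext p
      simp only [hT, Finset.mem_filter, Finset.mem_offDiag, Finset.mem_product,
        mem_univ, true_and, Dcnt]
      tauto
    omega
  omega

lemma c1_pos {a : A} (ha : a ∈ domX t) : 0 < c1 t a := by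
  obtain ⟨i, _, hi⟩ := Finset.mem_image.mp ha
  exact Finset.card_pos.mpr ⟨i, Finset.mem_filter.mpr ⟨Finset.mem_univ i, hi⟩⟩

lemma pdep_eq (u : Fin n → A × B) (hn : (n:ℝ) ≠ 0) :
    pdep u = ∑ a ∈ domX u, (∑ b ∈ domY u, (cnt u a b : ℝ)^2) / ((n:ℝ) * (c1 u a)) := by
  unfold pdep
  apply Finset.sum_congr rfl
  intro a ha
  have hc1 : (c1 u a : ℝ) ≠ 0 := by
    exact_mod_cast (c1_pos u ha).ne'
  unfold p1 pC pJ p1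
  have hb : ∀ b ∈ domY u, ((cnt u a b : ℝ)/n / ((c1 u a : ℝ)/n))^2
      = (cnt u a b : ℝ)^2 / ((c1 u a : ℝ))^2 := by
    intro b _
    rw [div_div_div_cancel_right₀]
    · rw [div_pow]
    · exact hn
  rw [Finset.sum_congr rfl hb, ← Finset.sum_div]
  field_simp

lemma inner_sum (hn2 : 2 ≤ n) (a : A) :
    ∑ σ : Equiv.Perm (Fin n), ∑ b ∈ domY t, (cnt (permRel t σ) a b : ℝ)^2 =
      (c1 t a : ℝ) * ((c1 t a : ℝ) * (((n-2).factorial : ℝ) * (Dcnt t : ℝ))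
        + (n.factorial : ℝ) - ((n-2).factorial : ℝ) * (Dcnt t : ℝ)) := by
  set X : ℝ := (n.factorial : ℝ) with hX
  set Y : ℝ := ((n-2).factorial : ℝ) * (Dcnt t : ℝ) with hY
  set Pa := univ.filter (fun i : Fin n => (t i).1 = a) with hPa
  have hstep : ∀ σ : Equiv.Perm (Fin n),
      ∑ b ∈ domY t, (cnt (permRel t σ) a b : ℝ)^2 =
      ∑ i ∈ Pa, ∑ j ∈ Pa, (if (t (σ i)).2 = (t (σ j)).2 then (1:ℝ) else 0) := by
    intro σ
    have : ∀ b ∈ domY t, (cnt (permRel t σ) a b : ℝ)^2 =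
        ((Pa.filter fun i => (t (σ i)).2 = b).card : ℝ)^2 := by
      intro b _
      rw [cnt_perm]
    rw [Finset.sum_congr rfl this]
    exact sq_expand t Pa (fun i => (t (σ i)).2)
      (fun i => Finset.mem_image_of_mem _ (mem_univ _))
  rw [Finset.sum_congr rfl (fun σ _ => hstep σ), Finset.sum_comm]
  have hinner : ∀ i ∈ Pa,
      ∑ σ : Equiv.Perm (Fin n), ∑ j ∈ Pa, (if (t (σ i)).2 = (t (σ j)).2 then (1:ℝ) else 0) =
      Pa.card * Y + X - Y := by
    intro i hi
    rw [Finset.sum_comm]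
    have hij : ∀ j ∈ Pa,
        ∑ σ : Equiv.Perm (Fin n), (if (t (σ i)).2 = (t (σ j)).2 then (1:ℝ) else 0) =
        if i = j then X else Y := by
      intro j _
      by_cases hij : i = j
      · subst hij
        simp only [if_pos rfl, eq_self_iff_true]
        rw [Finset.sum_const, card_univ, Fintype.card_perm, Fintype.card_fin]
        simp [hX]
      · rw [if_neg hij, Finset.sum_boole, sum_sigma_ind t hij]
        push_cast [hY]
        ring
    rw [Finset.sum_congr rfl hij]
    have : ∀ j ∈ Pa, (if i = j then X else Y) = Y + (if i = j then X - Y else 0) := by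
      intro j _
      by_cases hij : i = j <;> simp [hij]
    rw [Finset.sum_congr rfl this, Finset.sum_add_distrib, Finset.sum_const,
      Finset.sum_ite_eq Pa i (fun _ => X - Y), if_pos hi]
    push_cast
    ring
  rw [Finset.sum_congr rfl hinner, Finset.sum_const]
  have : c1 t a = Pa.card := rfl
  rw [this]
  push_cast
  ring

lemma sum_pdep_perm (hn2 : 2 ≤ n) :
    ∑ σ : Equiv.Perm (Fin n), pdep (permRel t σ) =
      ((n:ℝ) * (((n-2).factorial : ℝ) * (Dcnt t : ℝ))
        + ((domX t).card : ℝ) * (n.factorial : ℝ)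
        - ((domX t).card : ℝ) * (((n-2).factorial : ℝ) * (Dcnt t : ℝ))) / n := by
  have hn : (n:ℝ) ≠ 0 := by
    have : 0 < n := by omega
    exact_mod_cast this.ne'
  set X : ℝ := (n.factorial : ℝ) with hX
  set Y : ℝ := ((n-2).factorial : ℝ) * (Dcnt t : ℝ) with hY
  have h1 : ∀ σ : Equiv.Perm (Fin n), pdep (permRel t σ) =
      ∑ a ∈ domX t, (∑ b ∈ domY t, (cnt (permRel t σ) a b : ℝ)^2) / ((n:ℝ) * (c1 t a)) := by
    intro σ
    rw [pdep_eq _ hn]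
    simp only [domX_perm, domY_perm, c1_perm]
  rw [Finset.sum_congr rfl (fun σ _ => h1 σ), Finset.sum_comm]
  have h2 : ∀ a ∈ domX t,
      ∑ σ : Equiv.Perm (Fin n),
        (∑ b ∈ domY t, (cnt (permRel t σ) a b : ℝ)^2) / ((n:ℝ) * (c1 t a)) =
      ((c1 t a : ℝ) * Y + X - Y) / n := by
    intro a ha
    have hc1 : (c1 t a : ℝ) ≠ 0 := by exact_mod_cast (c1_pos t ha).ne'
    rw [← Finset.sum_div, inner_sum t hn2 a]
    rw [show ((n:ℝ) * (c1 t a)) = (c1 t a : ℝ) * n by ring]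
    rw [mul_div_mul_left _ _ hc1]
  rw [Finset.sum_congr rfl h2, ← Finset.sum_div]
  congr 1
  have h3 : ∀ a ∈ domX t, (c1 t a : ℝ) * Y + X - Y = (c1 t a : ℝ) * Y + (X - Y) := by
    intro a _; ring
  rw [Finset.sum_congr rfl h3, Finset.sum_add_distrib, ← Finset.sum_mul, Finset.sum_const]
  have h4 : ∑ a ∈ domX t, (c1 t a : ℝ) = (n : ℝ) := by
    rw [← Nat.cast_sum]
    exact_mod_cast congrArg (Nat.cast : ℕ → ℝ) (sum_c1 t)
  rw [h4]
  push_cast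
  ring

end Aux

/-- Equivalent closed form of the measure μ for relations violating the FD X→Y. -/
theorem mu_closed_form {A B : Type*} [DecidableEq A] [DecidableEq B]
    {n : ℕ} (t : Fin n → A × B) (h : ¬ satFD t) :
    1 - (∑ σ : Equiv.Perm (Fin n), pdep (permRel t σ)) / (n.factorial : ℝ) ≠ 0 ∧
    (domX t).card < n ∧
    0 < 1 - pdepY t ∧
    (pdep t - (∑ σ : Equiv.Perm (Fin n), pdep (permRel t σ)) / (n.factorial : ℝ)) /
        (1 - (∑ σ : Equiv.Perm (Fin n), pdep (permRel t σ)) / (n.factorial : ℝ)) =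
      1 - (1 - pdep t) / (1 - pdepY t) *
        (((n : ℝ) - 1) / ((n : ℝ) - ((domX t).card : ℝ))) := by
  simp only [satFD, not_forall] at h
  obtain ⟨i, j, hx, hy⟩ := h
  have hij : i ≠ j := fun e => hy (by rw [e])
  have hn2 : 2 ≤ n := by
    have : 1 < Fintype.card (Fin n) := Fintype.one_lt_card_iff.mpr ⟨i, j, hij⟩
    simp at this; omega
  have hnpos : (0:ℝ) < n := by exact_mod_cast (by omega : 0 < n)
  have hn : (n:ℝ) ≠ 0 := hnpos.ne'
  -- K < n
  have hKn : (domX t).card < n := by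
    have hle : (domX t).card ≤ n := by
      have := Finset.card_image_le (s := (univ : Finset (Fin n))) (f := fun i => (t i).1)
      simpa [domX] using this
    rcases lt_or_eq_of_le hle with hlt | heq
    · exact hlt
    · exfalso
      have hinj : Set.InjOn (fun i => (t i).1) ((univ : Finset (Fin n)) : Set (Fin n)) := by
        apply Finset.card_image_iff.mp
        rw [show (univ.image fun i : Fin n => (t i).1) = domX t from rfl, heq]
        simp
      exact hij (hinj (by simp) (by simp) hx)
  have hKr : ((domX t).card : ℝ) < (n:ℝ) := by exact_mod_cast hKn
  -- pdepY < 1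
  have hP : pdepY t < 1 := by
    have hsum1 : ∑ b ∈ domY t, p2 t b = 1 := by
      unfold p2
      rw [← Finset.sum_div]
      rw [show ∑ b ∈ domY t, (c2 t b : ℝ) = (n:ℝ) by exact_mod_cast congrArg (Nat.cast (R := ℝ)) (sum_c2 t)]
      exact div_self hn
    have hle : ∀ b ∈ domY t, (p2 t b)^2 ≤ p2 t b := by
      intro b _
      have h0 : (0:ℝ) ≤ p2 t b := by unfold p2; positivity
      have h1 : p2 t b ≤ 1 := by
        unfold p2
        rw [div_le_one hnpos]
        have : c2 t b ≤ n := by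
          have := Finset.card_filter_le (univ : Finset (Fin n)) (fun i => (t i).2 = b)
          simpa [c2] using this
        exact_mod_cast this
      nlinarith
    have hstrict : ∃ b ∈ domY t, (p2 t b)^2 < p2 t b := by
      refine ⟨(t i).2, Finset.mem_image_of_mem _ (mem_univ i), ?_⟩
      have h0 : (0:ℝ) < p2 t (t i).2 := by
        unfold p2
        apply div_pos _ hnpos
        have : 0 < c2 t (t i).2 :=
          Finset.card_pos.mpr ⟨i, Finset.mem_filter.mpr ⟨mem_univ i, rfl⟩⟩
        exact_mod_cast this
      have h1 : p2 t (t i).2 < 1 := by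
        unfold p2
        rw [div_lt_one hnpos]
        have : c2 t (t i).2 < n := by
          have hss : (univ.filter fun x : Fin n => (t x).2 = (t i).2) ⊂ univ :=
            Finset.filter_ssubset.mpr ⟨j, mem_univ j, fun e => hy e.symm⟩
          have := Finset.card_lt_card hss
          simpa [c2] using this
        exact_mod_cast this
      nlinarith
    calc pdepY t = ∑ b ∈ domY t, (p2 t b)^2 := rfl
      _ < ∑ b ∈ domY t, p2 t b := Finset.sum_lt_sum hle hstrict
      _ = 1 := hsum1
  have hP1 : (0:ℝ) < 1 - pdepY t := by linarith
  -- factorial identity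
  have hfact : (n.factorial : ℝ) = (n:ℝ) * ((n:ℝ)-1) * ((n-2).factorial : ℝ) := by
    obtain ⟨m, rfl⟩ := Nat.exists_eq_add_of_le hn2
    have hnat : (2+m).factorial = (2+m) * (1+m) * m.factorial := by
      have e : 2 + m = (1 + m) + 1 := by omega
      rw [e, Nat.factorial_succ]
      have e2 : 1 + m = m + 1 := by omega
      rw [e2, Nat.factorial_succ]
      ring
    rw [show 2+m-2 = m from by omega, hnat]
    push_cast
    ring
  -- D in terms of pdepY
  have hD : (Dcnt t : ℝ) = (n:ℝ)^2 * pdepY t - n := by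
    have hcast : (Dcnt t : ℝ) + n = ∑ b ∈ domY t, (c2 t b : ℝ)^2 := by
      exact_mod_cast congrArg (Nat.cast (R := ℝ)) (Dcnt_eq t)
    have hpd : pdepY t = (∑ b ∈ domY t, (c2 t b:ℝ)^2) / (n:ℝ)^2 := by
      unfold pdepY p2
      rw [Finset.sum_div]
      apply Finset.sum_congr rfl
      intro b _
      rw [div_pow]
    rw [hpd, ← hcast]
    field_simp
    ring
  have hn1 : (n:ℝ) - 1 ≠ 0 := by
    have : (1:ℝ) < n := by exact_mod_cast (by omega : 1 < n)
    linarith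
  have hnK : (n:ℝ) - ((domX t).card : ℝ) ≠ 0 := by linarith
  have hf2 : ((n-2).factorial : ℝ) ≠ 0 := by
    exact_mod_cast (Nat.factorial_pos (n-2)).ne'
  -- closed form of 1 - E
  have hclosed : 1 - (∑ σ : Equiv.Perm (Fin n), pdep (permRel t σ)) / (n.factorial : ℝ) =
      ((n:ℝ) - ((domX t).card : ℝ)) * (1 - pdepY t) / ((n:ℝ) - 1) := by
    rw [sum_pdep_perm t hn2, hD, hfact]
    field_simp
    ring
  have hpos : 0 < ((n:ℝ) - ((domX t).card : ℝ)) * (1 - pdepY t) / ((n:ℝ) - 1) := by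
    apply div_pos (mul_pos (by linarith) hP1)
    have : (1:ℝ) < n := by exact_mod_cast (by omega : 1 < n)
    linarith
  refine ⟨by rw [hclosed]; exact hpos.ne', hKn, hP1, ?_⟩
  have hE : (∑ σ : Equiv.Perm (Fin n), pdep (permRel t σ)) / (n.factorial : ℝ) =
      1 - ((n:ℝ) - ((domX t).card : ℝ)) * (1 - pdepY t) / ((n:ℝ) - 1) := by
    linarith [hclosed]
  rw [hE]
  have hsimp : ∀ x : ℝ, (1 : ℝ) - (1 - x) = x := fun x => by ring
  rw [hsimp]
  rw [div_eq_iff hpos.ne']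
  field_simp
  ring

end AFD
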